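/- Define T : ℕ → ℚ by T 0 = 0 and T n = ∑_{k=0}^{n-1} (n-1 choose k) · S k for n ≥ 1, where S is the sequence of super Catalan (little Schröder) numbers, and let A = ∑_{n≥0} T n · X^n in ℚ⟦X⟧. Then ((4 - 4·X) · A - 1)^2 = 8·X^2 - 8·X + 1 in ℚ⟦X⟧. -/

import Mathlib

open Finset

lemma hockey (n k : ℕ) : ∑ i ∈ range (n+1), i.choose k = (n+1).choose (k+1) := by
  rw [← Nat.sum_Icc_choose n k, range_eq_Ico, ← Finset.Ico_add_one_right_eq_Icc]
  refine (Finset.sum_subset (fun x hx => ?_) (fun x hx hx' => ?_)).symm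
  · simp at hx ⊢; omega
  · simp at hx hx'
    exact Nat.choose_eq_zero_of_lt (by omega)

lemma vand (k : ℕ) : ∀ n l : ℕ, ∑ i ∈ range (n+1), i.choose k * (n-i).choose l
    = (n+1).choose (k+l+1) := by
  intro n
  induction n with
  | zero =>
    intro l
    simp only [range_one, sum_singleton, Nat.zero_sub]
    rcases k with _ | k
    · rcases l with _ | l
      · simp
      · simp [Nat.choose_eq_zero_of_lt]
    · simp [Nat.choose_eq_zero_of_lt, Nat.choose_eq_zero_of_lt (show 1 < k+1+0+1 by omega)]
  | succ n ih =>
    intro l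
    rcases l with _ | l
    · simp only [Nat.choose_zero_right, mul_one]
      rw [hockey]
    · rw [Finset.sum_range_succ]
      have h1 : ∀ i ∈ range (n+1), i.choose k * (n + 1 - i).choose (l+1)
          = i.choose k * (n-i).choose (l+1) + i.choose k * (n-i).choose l := by
        intro i hi
        simp at hi
        have : n + 1 - i = (n - i) + 1 := by omega
        rw [this, Nat.choose_succ_succ']; ring
      rw [Finset.sum_congr rfl h1, Finset.sum_add_distrib, ih, ih]
      simp only [Nat.sub_self, Nat.choose_eq_zero_of_lt (Nat.succ_pos l), mul_zero, add_zero]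
      rw [show k + (l+1) + 1 = (k+l+1) + 1 by ring,
        Nat.choose_succ_succ (n+1) (k+l+1), Nat.succ_eq_add_one]
      omega

lemma tri (N : ℕ) (f : ℕ → ℕ → ℚ) (hf : ∀ k l, N ≤ k + l → f k l = 0) :
    ∑ k ∈ range N, ∑ l ∈ range N, f k l = ∑ m ∈ range N, ∑ k ∈ range (m+1), f k (m-k) := by
  have step1 : ∀ m ∈ range N, ∑ k ∈ range (m+1), f k (m-k)
      = ∑ k ∈ range N, if k ≤ m then f k (m-k) else 0 := by
    intro m hm
    simp at hm
    rw [← Finset.sum_filter]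
    congr 1
    ext k
    simp [Nat.lt_succ_iff]
    omega
  rw [Finset.sum_congr rfl step1]
  conv_rhs => rw [Finset.sum_comm]
  refine Finset.sum_congr rfl fun k hk => ?_
  simp at hk
  conv_rhs => rw [← Finset.sum_filter]
  have : (range N).filter (fun m => k ≤ m) = Finset.Ico k N := by
    ext m; simp [Nat.lt_succ_iff]; omega
  rw [this, Finset.sum_Ico_eq_sum_range]
  have h2 : ∀ l ∈ range (N - k), f k (k + l - k) = f k l := by
    intro l _; congr 1; omega
  rw [Finset.sum_congr rfl h2]
  refine (Finset.sum_subset (fun l hl => ?_) (fun l hl hl' => ?_)).symm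
  · simp at hl ⊢; omega
  · simp at hl hl'
    exact hf k l (by omega)

lemma ckey (S : ℕ → ℕ) (T : ℕ → ℚ) (hT0 : T 0 = 0)
    (hT : ∀ m : ℕ, T (m + 1) = ∑ k ∈ range (m + 1), (m.choose k : ℚ) * (S k : ℚ)) :
    ∀ n : ℕ, ∑ i ∈ range (n+2), T i * T (n+1-i)
      = ∑ m ∈ range n, ((n.choose (m+1) : ℚ)
          * ∑ k ∈ range (m+1), (S k : ℚ) * (S (m-k) : ℚ)) := by
  have hTex : ∀ m N : ℕ, m < N → T (m+1) = ∑ k ∈ range N, (m.choose k : ℚ) * (S k : ℚ) := by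
    intro m N hm
    rw [hT]
    refine Finset.sum_subset (fun k hk => ?_) (fun k hk hk' => ?_)
    · simp at hk ⊢; omega
    · simp at hk hk'
      rw [Nat.choose_eq_zero_of_lt (by omega)]
      simp
  intro n
  have c1 : ∑ i ∈ range (n+2), T i * T (n+1-i) = ∑ a ∈ range n, T (a+1) * T (n-a) := by
    rw [Finset.sum_range_succ, Finset.sum_range_succ']
    simp [hT0, Nat.succ_sub_succ]
  rw [c1]
  rcases n with _ | N
  · simp
  set n := N + 1 with hn
  have c2 : ∑ a ∈ range n, T (a+1) * T (n-a)
      = ∑ a ∈ range n, ((∑ k ∈ range n, (a.choose k : ℚ) * (S k : ℚ))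
          * (∑ l ∈ range n, ((n-1-a).choose l : ℚ) * (S l : ℚ))) := by
    refine Finset.sum_congr rfl fun a ha => ?_
    simp only [mem_range] at ha
    rw [← hTex a n ha, show n - a = (n-1-a) + 1 by omega, ← hTex (n-1-a) n (by omega)]
  rw [c2]
  have c3 : ∑ a ∈ range n, ((∑ k ∈ range n, (a.choose k : ℚ) * (S k : ℚ))
          * (∑ l ∈ range n, ((n-1-a).choose l : ℚ) * (S l : ℚ)))
      = ∑ k ∈ range n, ∑ l ∈ range n,
          ((n.choose (k+l+1) : ℚ) * ((S k : ℚ) * (S l : ℚ))) := by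
    have e1 : ∀ a ∈ range n, (∑ k ∈ range n, (a.choose k : ℚ) * (S k : ℚ))
          * (∑ l ∈ range n, ((n-1-a).choose l : ℚ) * (S l : ℚ))
        = ∑ k ∈ range n, ∑ l ∈ range n,
            ((a.choose k : ℚ) * ((n-1-a).choose l : ℚ)) * ((S k : ℚ) * (S l : ℚ)) := by
      intro a _
      rw [Finset.sum_mul_sum]
      refine Finset.sum_congr rfl fun k _ => Finset.sum_congr rfl fun l _ => ?_
      ring
    rw [Finset.sum_congr rfl e1, Finset.sum_comm]
    refine Finset.sum_congr rfl fun k _ => ?_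
    rw [Finset.sum_comm]
    refine Finset.sum_congr rfl fun l _ => ?_
    rw [← Finset.sum_mul]
    have : ∑ a ∈ range n, (a.choose k : ℚ) * ((n-1-a).choose l : ℚ)
        = ((∑ a ∈ range n, a.choose k * (n-1-a).choose l : ℕ) : ℚ) := by
      push_cast; rfl
    rw [this]
    have : ∑ a ∈ range n, a.choose k * (n-1-a).choose l = n.choose (k+l+1) := by
      have := vand k N l
      simpa [hn] using this
    rw [this]
  rw [c3]
  have hf : ∀ k l : ℕ, n ≤ k + l → ((n.choose (k+l+1) : ℚ) * ((S k : ℚ) * (S l : ℚ))) = 0 := by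
    intro k l h
    rw [Nat.choose_eq_zero_of_lt (by omega)]
    simp
  rw [tri n _ hf]
  refine Finset.sum_congr rfl fun m hm => ?_
  rw [Finset.mul_sum]
  refine Finset.sum_congr rfl fun k hk => ?_
  simp only [mem_range, Nat.lt_succ_iff] at hk
  rw [show k + (m - k) + 1 = m + 1 by omega]

lemma keylemma (S : ℕ → ℕ) (hS0 : S 0 = 1)
    (hSrec : ∀ n, S (n + 1) + S n = 2 * ∑ i ∈ Finset.range (n + 1), S i * S (n - i))
    (T : ℕ → ℚ) (hT0 : T 0 = 0)
    (hT : ∀ m : ℕ, T (m + 1) = ∑ k ∈ range (m + 1), (m.choose k : ℚ) * (S k : ℚ)) (n : ℕ) :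
    2 * ∑ i ∈ range (n+3), T i * T (n+2-i)
      = 2 * ∑ i ∈ range (n+2), T i * T (n+1-i) + T (n+2) := by
  have hD : ∀ m : ℕ, 2 * ∑ k ∈ range (m+1), (S k : ℚ) * (S (m-k) : ℚ)
      = (S (m+1) : ℚ) + (S m : ℚ) := by
    intro m
    have h2 := congrArg (Nat.cast : ℕ → ℚ) (hSrec m)
    push_cast at h2
    linarith
  rw [ckey S T hT0 hT (n+1), ckey S T hT0 hT n, Finset.mul_sum, Finset.mul_sum]
  have l1 : ∀ m ∈ range (n+1), 2 * (((n+1).choose (m+1) : ℚ)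
        * ∑ k ∈ range (m+1), (S k : ℚ) * (S (m-k) : ℚ))
      = ((n.choose (m+1) : ℚ) + (n.choose m : ℚ)) * ((S (m+1) : ℚ) + (S m : ℚ)) := by
    intro m _
    rw [show (2:ℚ) * (((n+1).choose (m+1) : ℚ) * _) = ((n+1).choose (m+1) : ℚ)
        * (2 * ∑ k ∈ range (m+1), (S k : ℚ) * (S (m-k) : ℚ)) by ring, hD]
    push_cast [Nat.choose_succ_succ n m]
    ring
  rw [Finset.sum_congr rfl l1]
  have r1 : ∀ m ∈ range n, 2 * ((n.choose (m+1) : ℚ)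
        * ∑ k ∈ range (m+1), (S k : ℚ) * (S (m-k) : ℚ))
      = (n.choose (m+1) : ℚ) * ((S (m+1) : ℚ) + (S m : ℚ)) := by
    intro m _
    rw [show (2:ℚ) * ((n.choose (m+1) : ℚ) * _) = (n.choose (m+1) : ℚ)
        * (2 * ∑ k ∈ range (m+1), (S k : ℚ) * (S (m-k) : ℚ)) by ring, hD]
  rw [Finset.sum_congr rfl r1]
  simp only [add_mul]
  rw [Finset.sum_add_distrib]
  have r2 : ∑ m ∈ range (n+1), (n.choose (m+1) : ℚ) * ((S (m+1) : ℚ) + (S m : ℚ))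
      = ∑ m ∈ range n, (n.choose (m+1) : ℚ) * ((S (m+1) : ℚ) + (S m : ℚ)) := by
    rw [Finset.sum_range_succ]
    simp [Nat.choose_succ_self]
  rw [r2]
  congr 1
  have r3 : T (n+2) = (∑ m ∈ range (n+1), (n.choose m : ℚ) * (S (m+1) : ℚ))
      + ∑ m ∈ range (n+1), (n.choose m : ℚ) * (S m : ℚ) := by
    rw [hT (n+1), Finset.sum_range_succ']
    have e : ∀ k ∈ range (n+1), ((n+1).choose (k+1) : ℚ) * (S (k+1) : ℚ)
        = (n.choose k : ℚ) * (S (k+1) : ℚ) + (n.choose (k+1) : ℚ) * (S (k+1) : ℚ) := by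
      intro k _
      push_cast [Nat.choose_succ_succ n k]
      ring
    rw [Finset.sum_congr rfl e, Finset.sum_add_distrib]
    have e2 : ∑ m ∈ range (n+1), (n.choose m : ℚ) * (S m : ℚ)
        = (∑ k ∈ range (n+1), (n.choose (k+1) : ℚ) * (S (k+1) : ℚ))
          + (n.choose 0 : ℚ) * (S 0 : ℚ) := by
      rw [Finset.sum_range_succ']
      have e3 : ∑ k ∈ range (n+1), (n.choose (k+1):ℚ) * (S (k+1) : ℚ)
          = ∑ k ∈ range n, (n.choose (k+1):ℚ) * (S (k+1) : ℚ) := by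
        rw [Finset.sum_range_succ]
        simp [Nat.choose_succ_self]
      rw [e3]
    rw [e2]
    simp only [Nat.choose_zero_right]
    ring
  rw [r3]
  have r4 : ∑ m ∈ range (n+1), (n.choose m : ℚ) * ((S (m+1) : ℚ) + (S m : ℚ))
      = ∑ m ∈ range (n+1), ((n.choose m : ℚ) * (S (m+1) : ℚ)
          + (n.choose m : ℚ) * (S m : ℚ)) :=
    Finset.sum_congr rfl fun m _ => by ring
  rw [r4, Finset.sum_add_distrib]


/-- Let `S` be the super Catalan (little Schröder) numbers, `T 0 = 0` and
`T n = ∑_{k=0}^{n-1} (n-1 choose k) * S k` for `n ≥ 1`, and `A = ∑ T n * X^n` ∈ `ℚ⟦X⟧`.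
Then `((4 - 4X) * A - 1)^2 = 8X^2 - 8X + 1`, i.e. `A = (1 - √(8x²-8x+1))/(4-4x)`. -/
theorem superCatalan_binomial_transform_gf (S : ℕ → ℕ) (hS0 : S 0 = 1)
    (hSrec : ∀ n, S (n + 1) + S n = 2 * ∑ i ∈ Finset.range (n + 1), S i * S (n - i))
    (T : ℕ → ℚ) (hT0 : T 0 = 0)
    (hT : ∀ m : ℕ, T (m + 1) = ∑ k ∈ Finset.range (m + 1), (m.choose k : ℚ) * (S k : ℚ)) :
    ((4 - 4 * PowerSeries.X) * PowerSeries.mk T - 1) ^ 2 =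
      8 * PowerSeries.X ^ 2 - 8 * PowerSeries.X + 1 := by
  set A := PowerSeries.mk T with hA
  have hc : ∀ n, (PowerSeries.coeff n) (A ^ 2) = ∑ i ∈ range (n+1), T i * T (n-i) := by
    intro n
    rw [sq, PowerSeries.coeff_mul, Finset.Nat.sum_antidiagonal_eq_sum_range_succ_mk]
    simp [hA, PowerSeries.coeff_mk]
  have hT1 : T 1 = 1 := by
    rw [hT 0]
    simp [hS0]
  have hq : A + (PowerSeries.X * A ^ 2 + PowerSeries.X * A ^ 2)
      = (A ^ 2 + A ^ 2) + PowerSeries.X := by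
    ext n
    simp only [map_add]
    rcases n with _ | _ | k
    · simp only [PowerSeries.coeff_zero_X_mul, hc 0, PowerSeries.coeff_zero_X, hA,
        PowerSeries.coeff_mk]
      simp [hT0]
    · simp only [PowerSeries.coeff_succ_X_mul, hc 0, hc 1, PowerSeries.coeff_X]
      simp only [hA, PowerSeries.coeff_mk]
      simp [hT0, hT1, Finset.sum_range_succ]
    · have hk := keylemma S hS0 hSrec T hT0 hT k
      simp only [PowerSeries.coeff_succ_X_mul, hc (k+1), hc (k+2), PowerSeries.coeff_X]
      simp only [hA, PowerSeries.coeff_mk]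
      have : ¬ (k + 1 + 1 = 1) := by omega
      simp only [this, if_false]
      push_cast at hk ⊢
      linarith
  linear_combination ((-8 : PowerSeries ℚ) + 8 * PowerSeries.X) * hq
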